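/- Let α > 0 and let v : [0, ∞) → ℝ be continuous on [0, ∞), differentiable on (0, ∞), and such that both v and its derivative v′ are square-integrable on (0, ∞). Then ∫₀^∞ v′(t)² dt − α v(0)² + α² ∫₀^∞ v(t)² dt ≥ 0. -/

import Mathlib

open MeasureTheory Filter Set

noncomputable section

/-- The one-dimensional half-line Robin inequality: if `v` is continuous on
`[0, ∞)`, differentiable on `(0, ∞)`, and `v` and `v'` are square-integrable on `(0, ∞)`, then
`∫₀^∞ v′(t)² dt − α v(0)² + α² ∫₀^∞ v(t)² dt ≥ 0`. -/
theorem halfline_robin_inequality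
    (α : ℝ) (hα : 0 < α) (v : ℝ → ℝ)
    (hcont : ContinuousOn v (Set.Ici 0))
    (hdiff : DifferentiableOn ℝ v (Set.Ioi 0))
    (hv2 : IntegrableOn (fun t => (v t) ^ 2) (Set.Ioi 0))
    (hv'2 : IntegrableOn (fun t => (deriv v t) ^ 2) (Set.Ioi 0)) :
    0 ≤ (∫ t in Set.Ioi (0 : ℝ), (deriv v t) ^ 2)
        - α * (v 0) ^ 2
        + α ^ 2 * (∫ t in Set.Ioi (0 : ℝ), (v t) ^ 2) := by
  set F : ℝ → ℝ := fun t => v t ^ 2 with hFdef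
  set G : ℝ → ℝ := fun t => 2 * v t * deriv v t with hGdef
  -- measurability
  have hvmeas : AEStronglyMeasurable v (volume.restrict (Set.Ioi 0)) :=
    (hcont.mono Set.Ioi_subset_Ici_self).aestronglyMeasurable measurableSet_Ioi
  have hdmeas : AEStronglyMeasurable (deriv v) (volume.restrict (Set.Ioi 0)) :=
    (measurable_deriv v).aestronglyMeasurable
  -- G is integrable on (0, ∞)
  have hGint : IntegrableOn G (Set.Ioi 0) := by
    have hsum : IntegrableOn (fun t => v t ^ 2 + deriv v t ^ 2) (Set.Ioi 0) := hv2.add hv'2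
    refine hsum.mono' ?_ ?_
    · exact ((aestronglyMeasurable_const.mul hvmeas).mul hdmeas)
    · filter_upwards with t
      have h1 : |2 * v t * deriv v t| ≤ v t ^ 2 + deriv v t ^ 2 := by
        rcases abs_cases (2 * v t * deriv v t) with ⟨h, _⟩ | ⟨h, _⟩ <;> rw [h] <;> nlinarith [sq_nonneg (v t - deriv v t), sq_nonneg (v t + deriv v t)]
      simpa [G, Real.norm_eq_abs] using h1
  -- derivative of F
  have hder : ∀ t ∈ Set.Ioi (0:ℝ), HasDerivAt F (G t) t := by
    intro t ht
    have hv : HasDerivAt v (deriv v t) t :=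
      ((hdiff t ht).differentiableAt (Ioi_mem_nhds ht)).hasDerivAt
    simpa [F, G, pow_one] using hv.fun_pow 2
  -- FTC on [1, t]
  have hFT : ∀ t : ℝ, 1 ≤ t → F t = F 1 + ∫ s in (1:ℝ)..t, G s := by
    intro t ht
    have h1 : ∀ x ∈ Set.uIcc (1:ℝ) t, HasDerivAt F (G x) x := by
      intro x hx
      rw [Set.uIcc_of_le ht] at hx
      exact hder x (lt_of_lt_of_le one_pos hx.1)
    have h2 : IntervalIntegrable G volume 1 t := by
      apply IntegrableOn.intervalIntegrable
      apply hGint.mono_set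
      intro x hx
      rw [Set.uIcc_of_le ht] at hx
      exact lt_of_lt_of_le one_pos hx.1
    have := intervalIntegral.integral_eq_sub_of_hasDerivAt h1 h2
    linarith
  -- limit of F at infinity
  have hGint1 : IntegrableOn G (Set.Ioi 1) := hGint.mono_set (Set.Ioi_subset_Ioi one_pos.le)
  have hlimI : Tendsto (fun t : ℝ => ∫ s in (1:ℝ)..t, G s) atTop
      (nhds (∫ s in Set.Ioi 1, G s)) :=
    intervalIntegral_tendsto_integral_Ioi 1 hGint1 tendsto_id
  set L : ℝ := F 1 + ∫ s in Set.Ioi 1, G s with hLdef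
  have hFL : Tendsto F atTop (nhds L) := by
    have h := hlimI.const_add (F 1)
    refine h.congr' ?_
    filter_upwards [eventually_ge_atTop (1:ℝ)] with t ht using (hFT t ht).symm
  have hL0 : L = 0 := by
    by_contra h
    have hLnn : 0 ≤ L := ge_of_tendsto' hFL fun t => sq_nonneg (v t)
    have hLpos : 0 < L := lt_of_le_of_ne hLnn (Ne.symm h)
    have hev : ∀ᶠ t in atTop, L / 2 < F t := hFL.eventually (eventually_gt_nhds (half_lt_self hLpos))
    obtain ⟨T, hT⟩ := eventually_atTop.1 hev
    set T' : ℝ := max T 1 with hT'def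
    have hFint' : IntegrableOn F (Set.Ioi T') :=
      hv2.mono_set (Set.Ioi_subset_Ioi (le_trans one_pos.le (le_max_right T 1)))
    have hconst : IntegrableOn (fun _ : ℝ => L / 2) (Set.Ioi T') := by
      refine hFint'.mono' aestronglyMeasurable_const ?_
      rw [ae_restrict_iff' measurableSet_Ioi]
      filter_upwards with t ht
      have := hT t (le_trans (le_max_left T 1) ht.le)
      rw [Real.norm_eq_abs, abs_of_pos (half_pos hLpos)]
      exact this.le
    rw [integrableOn_const_iff] at hconst
    rcases hconst with h' | h'
    · exact absurd (enorm_eq_zero.mp h') (ne_of_gt (half_pos hLpos))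
    · rw [Real.volume_Ioi] at h'
      exact absurd h' (by simp)
  -- FTC on (0, ∞)
  have hcontF0 : ContinuousWithinAt F (Set.Ici 0) 0 :=
    ((hcont 0 Set.self_mem_Ici).pow 2)
  have hkey : ∫ t in Set.Ioi (0:ℝ), G t = 0 - F 0 :=
    integral_Ioi_of_hasDerivAt_of_tendsto hcontF0 hder hGint (hL0 ▸ hFL)
  -- combine
  have hint2 : IntegrableOn (fun t => α * G t + α ^ 2 * v t ^ 2) (Set.Ioi 0) :=
    (hGint.const_mul α).add (hv2.const_mul (α ^ 2))
  have e1 : ∫ t in Set.Ioi (0:ℝ), (deriv v t + α * v t) ^ 2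
      = ∫ t in Set.Ioi (0:ℝ), (deriv v t ^ 2 + (α * G t + α ^ 2 * v t ^ 2)) := by
    congr 1
    ext t
    simp only [G]
    ring
  have e2 : ∫ t in Set.Ioi (0:ℝ), (deriv v t ^ 2 + (α * G t + α ^ 2 * v t ^ 2))
      = (∫ t in Set.Ioi (0:ℝ), deriv v t ^ 2)
        + ∫ t in Set.Ioi (0:ℝ), (α * G t + α ^ 2 * v t ^ 2) :=
    integral_add hv'2 hint2
  have e3 : ∫ t in Set.Ioi (0:ℝ), (α * G t + α ^ 2 * v t ^ 2)
      = α * (∫ t in Set.Ioi (0:ℝ), G t) + α ^ 2 * ∫ t in Set.Ioi (0:ℝ), v t ^ 2 := by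
    rw [integral_add (hGint.const_mul α) (hv2.const_mul (α ^ 2)),
      integral_const_mul, integral_const_mul]
  have hnn : 0 ≤ ∫ t in Set.Ioi (0:ℝ), (deriv v t + α * v t) ^ 2 :=
    integral_nonneg fun t => sq_nonneg _
  have hF0 : F 0 = v 0 ^ 2 := rfl
  rw [e1, e2, e3, hkey] at hnn
  simp only [hFdef] at hnn ⊢
  linarith
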